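/- The double integral ∫₀^∞ ∫₀^1 y^{1/2}·ln(w)/((y+1)(w+y)²) dw dy plus ∫₀^∞ ∫₁^∞ y^{1/2}·ln(w)/((y+1)(w+y)²) dw dy equals 0; i.e., ∫₀^∞ ∫₀^∞ √y·ln(w)/((y+1)(w+y)²) dw dy = 0 (with the integral of the positive and negative parts both finite). -/

import Mathlib

open MeasureTheory Set Real Filter

lemma aux_deriv {y : ℝ} (hy : 0 < y) : ∀ w ∈ Ici (0:ℝ), HasDerivAt (fun w : ℝ => -(w+y)⁻¹) (((w+y)^2)⁻¹) w := by
  intro w hw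
  simp only [mem_Ici] at hw
  have hne : w + y ≠ 0 := by positivity
  have h1 : HasDerivAt (fun w : ℝ => w + y) 1 w := (hasDerivAt_id w).add_const y
  have := ((hasDerivAt_inv hne).comp w h1).neg
  exact this.congr_deriv (by ring)

lemma aux_tendsto {y : ℝ} : Tendsto (fun w : ℝ => -(w+y)⁻¹) atTop (nhds 0) := by
  have : Tendsto (fun w : ℝ => w + y) atTop atTop := tendsto_atTop_add_const_right _ _ tendsto_id
  simpa using (tendsto_inv_atTop_zero.comp this).neg

lemma sq_int {y : ℝ} (hy : 0 < y) : IntegrableOn (fun w : ℝ => ((w+y)^2)⁻¹) (Ioi 0) := by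
  refine integrableOn_Ioi_deriv_of_nonneg' (aux_deriv hy) (fun x hx => by positivity) aux_tendsto

lemma sq_val {y : ℝ} (hy : 0 < y) : ∫ w in Ioi (0:ℝ), ((w+y)^2)⁻¹ = y⁻¹ := by
  have := integral_Ioi_of_hasDerivAt_of_tendsto' (aux_deriv hy) (sq_int hy) aux_tendsto
  simpa using this



lemma log_le_rpow {x : ℝ} (hx : 1 ≤ x) : Real.log x ≤ 4 * x ^ ((4:ℝ)⁻¹) := by
  have h0 : (0:ℝ) < x := by linarith
  have h1 : Real.log (x ^ ((4:ℝ)⁻¹)) = (4:ℝ)⁻¹ * Real.log x := Real.log_rpow h0 _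
  have h2 : Real.log (x ^ ((4:ℝ)⁻¹)) ≤ x ^ ((4:ℝ)⁻¹) - 1 :=
    Real.log_le_sub_one_of_pos (Real.rpow_pos_of_pos h0 _)
  nlinarith [Real.rpow_pos_of_pos h0 ((4:ℝ)⁻¹)]

lemma abs_log_le_of_le_one {x : ℝ} (hx : 0 < x) (hx1 : x ≤ 1) :
    |Real.log x| ≤ 4 * x ^ (-(4:ℝ)⁻¹) := by
  have h1 : |Real.log x| = Real.log x⁻¹ := by
    rw [Real.log_inv, abs_of_nonpos (Real.log_nonpos hx.le hx1)]
  rw [h1, Real.rpow_neg hx.le, ← Real.inv_rpow hx.le]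
  exact log_le_rpow (one_le_inv_iff₀.mpr ⟨hx, hx1⟩)

lemma abs_log_le_of_one_le {x : ℝ} (hx : 1 ≤ x) : |Real.log x| ≤ 4 * x ^ ((4:ℝ)⁻¹) := by
  rw [abs_of_nonneg (Real.log_nonneg hx)]; exact log_le_rpow hx



lemma contlog {y : ℝ} (hy : 0 < y) :
    ContinuousOn (fun w : ℝ => |Real.log w| / (w+y)^2) (Ioi 0) := by
  apply ContinuousOn.div
  · exact (Real.continuousOn_log.mono (fun x hx => by simp [ne_of_gt (mem_Ioi.mp hx)])).abs
  · fun_prop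
  · intro w hw
    have : (0:ℝ) < w := hw
    positivity

lemma rpow_int_Ioc : IntegrableOn (fun x : ℝ => x ^ (-(4:ℝ)⁻¹)) (Ioc 0 1) := by
  rw [← intervalIntegrable_iff_integrableOn_Ioc_of_le zero_le_one]
  apply intervalIntegral.intervalIntegrable_rpow'
  norm_num

lemma intlog {y : ℝ} (hy : 0 < y) :
    IntegrableOn (fun w : ℝ => |Real.log w| / (w+y)^2) (Ioi 0) := by
  rw [← Ioc_union_Ioi_eq_Ioi (zero_le_one)]
  apply IntegrableOn.union
  · -- on Ioc 0 1
    apply Integrable.mono' (g := fun w : ℝ => (4 * w ^ (-(4:ℝ)⁻¹)) / y^2)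
    · exact (rpow_int_Ioc.const_mul 4).div_const _
    · exact ((contlog hy).mono Ioc_subset_Ioi_self).aestronglyMeasurable measurableSet_Ioc
    · filter_upwards [ae_restrict_mem measurableSet_Ioc] with w hw
      obtain ⟨hw0, hw1⟩ := hw
      have hb := abs_log_le_of_le_one hw0 hw1
      rw [Real.norm_eq_abs, abs_of_nonneg (by positivity)]
      refine div_le_div₀ (by positivity) hb (by positivity) (by nlinarith)
  · -- on Ioi 1
    apply Integrable.mono' (g := fun w : ℝ => 4 * w ^ (-(7:ℝ)/4))
    · exact (integrableOn_Ioi_rpow_of_lt (by norm_num) one_pos).const_mul 4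
    · exact ((contlog hy).mono (fun x (hx : x ∈ Ioi 1) => lt_trans one_pos hx)).aestronglyMeasurable
        measurableSet_Ioi
    · filter_upwards [ae_restrict_mem measurableSet_Ioi] with w hw
      have hw1 : (1:ℝ) ≤ w := le_of_lt hw
      have hw0 : (0:ℝ) < w := lt_of_lt_of_le one_pos hw1
      have hb := abs_log_le_of_one_le hw1
      rw [Real.norm_eq_abs, abs_of_nonneg (by positivity)]
      have h2 : |Real.log w| / (w+y)^2 ≤ 4 * w ^ ((4:ℝ)⁻¹) / w^2 := by
        exact div_le_div₀ (by positivity) hb (by positivity) (by nlinarith)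
      refine h2.trans (le_of_eq ?_)
      rw [show (w:ℝ)^2 = w ^ (2:ℝ) by rw [← Real.rpow_natCast w 2]; norm_num,
        mul_div_assoc, ← Real.rpow_sub hw0]
      norm_num


lemma contlog' {y : ℝ} (hy : 0 < y) :
    ContinuousOn (fun w : ℝ => Real.log w / (w+y)^2) (Ioi 0) := by
  apply ContinuousOn.div
  · exact Real.continuousOn_log.mono (fun x hx => by simp [ne_of_gt (mem_Ioi.mp hx)])
  · fun_prop
  · intro w hw
    have : (0:ℝ) < w := hw
    positivity

lemma intlog_signed {y : ℝ} (hy : 0 < y) :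
    IntegrableOn (fun w : ℝ => Real.log w / (w+y)^2) (Ioi 0) := by
  apply Integrable.mono' (intlog hy)
    ((contlog' hy).aestronglyMeasurable measurableSet_Ioi)
  filter_upwards [ae_restrict_mem measurableSet_Ioi] with w hw
  have hwy : (0:ℝ) < w + y := by have : (0:ℝ) < w := hw; positivity
  rw [Real.norm_eq_abs, abs_div, abs_of_nonneg (by positivity : (0:ℝ) ≤ (w+y)^2)]

lemma inner_val {y : ℝ} (hy : 0 < y) :
    ∫ w in Ioi (0:ℝ), Real.log w / (w+y)^2 = Real.log y / y := by
  set I := ∫ w in Ioi (0:ℝ), Real.log w / (w+y)^2 with hI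
  have hy2 : (0:ℝ) < y^2 := by positivity
  -- step 1 : I = y^2 * ∫ x in Ioi 0, log (y^2*x)/(y^2*x+y)^2
  have step1 : ∫ x in Ioi (0:ℝ), Real.log (y^2*x) / (y^2*x+y)^2 = (y^2)⁻¹ * I := by
    have := integral_comp_mul_left_Ioi (fun w => Real.log w / (w+y)^2) 0 hy2
    simpa [mul_zero, smul_eq_mul] using this
  -- step 2 : rpow substitution
  have step2 := integral_comp_rpow_Ioi (fun x => Real.log (y^2*x) / (y^2*x+y)^2)
      (p := -1) (by norm_num)
  -- step 3 : pointwise identity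
  have step3 : ∀ x ∈ Ioi (0:ℝ),
      (|(-1:ℝ)| * x ^ ((-1:ℝ) - 1)) • (Real.log (y^2 * x ^ (-1:ℝ)) / (y^2 * x ^ (-1:ℝ) + y)^2)
        = (y^2)⁻¹ * ((2 * Real.log y - Real.log x) / (x+y)^2) := by
    intro x hx
    have hx0 : (0:ℝ) < x := hx
    have hxy : (0:ℝ) < x + y := by positivity
    rw [Real.rpow_neg_one, show ((-1:ℝ) - 1) = (-2 : ℝ) by norm_num,
      show x ^ (-2:ℝ) = (x^2)⁻¹ by
        rw [← Real.rpow_natCast x 2, ← Real.rpow_neg hx0.le]; norm_num,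
      Real.log_mul (by positivity) (by positivity), Real.log_inv,
      Real.log_pow]
    have h1 : y^2 * x⁻¹ + y = y * (x + y) / x := by field_simp; ring
    rw [h1, smul_eq_mul]
    field_simp
    ring
  have key : ∫ x in Ioi (0:ℝ), Real.log (y^2*x) / (y^2*x+y)^2
      = (y^2)⁻¹ * (2 * Real.log y * y⁻¹ - I) := by
    rw [← step2]
    have e1 : ∫ x in Ioi (0:ℝ),
        (|(-1:ℝ)| * x ^ ((-1:ℝ) - 1)) • ((fun x => Real.log (y^2*x) / (y^2*x+y)^2) (x ^ (-1:ℝ)))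
        = ∫ x in Ioi (0:ℝ), (y^2)⁻¹ * ((2 * Real.log y - Real.log x) / (x+y)^2) :=
      setIntegral_congr_fun measurableSet_Ioi step3
    rw [e1, integral_const_mul]
    congr 1
    have hsplit : EqOn (fun x : ℝ => (2*Real.log y - Real.log x)/(x+y)^2)
        (fun x : ℝ => (2*Real.log y) * ((x+y)^2)⁻¹ - Real.log x/(x+y)^2) (Ioi 0) := by
      intro x hx; simp only; ring
    rw [setIntegral_congr_fun measurableSet_Ioi hsplit,
      integral_sub ((sq_int hy).const_mul _) (intlog_signed hy),
      integral_const_mul, sq_val hy]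

  have h2 := step1.symm.trans key
  have h3 := mul_left_cancel₀ (inv_ne_zero hy2.ne') h2
  rw [div_eq_mul_inv]
  linarith

lemma outer_zero : ∫ y in Ioi (0:ℝ), Real.sqrt y * Real.log y / ((y+1)*y) = 0 := by
  set g : ℝ → ℝ := fun y => Real.sqrt y * Real.log y / ((y+1)*y) with hg
  have h := integral_comp_rpow_Ioi g (p := -1) (by norm_num)
  have e1 : ∫ x in Ioi (0:ℝ), (|(-1:ℝ)| * x ^ ((-1:ℝ) - 1)) • g (x ^ (-1:ℝ))
      = ∫ x in Ioi (0:ℝ), -g x := by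
    refine setIntegral_congr_fun measurableSet_Ioi (fun x hx => ?_)
    have hx0 : (0:ℝ) < x := hx
    have hs : Real.sqrt x * Real.sqrt x = x := Real.mul_self_sqrt hx0.le
    have hs0 : (0:ℝ) < Real.sqrt x := Real.sqrt_pos.mpr hx0
    rw [Real.rpow_neg_one, show ((-1:ℝ) - 1) = (-2 : ℝ) by norm_num,
      show x ^ (-2:ℝ) = (x^2)⁻¹ by
        rw [← Real.rpow_natCast x 2, ← Real.rpow_neg hx0.le]; norm_num,
      smul_eq_mul, hg]
    simp only [Real.sqrt_inv, Real.log_inv]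
    field_simp
    linear_combination (Real.log x * (1+x)) * hs
  rw [e1, integral_neg] at h
  linarith


noncomputable def Cc : ℝ := ∫ x in Ioi (0:ℝ), |Real.log x| / (x+1)^2

lemma Cc_nonneg : 0 ≤ Cc :=
  setIntegral_nonneg measurableSet_Ioi (fun x _ => by positivity)

lemma inner_bound {y : ℝ} (hy : 0 < y) :
    ∫ w in Ioi (0:ℝ), |Real.log w| / (w+y)^2 ≤ (|Real.log y| + Cc) / y := by
  have h1 : ∫ x in Ioi (0:ℝ), |Real.log (y*x)| / (y*x+y)^2
      = y⁻¹ * ∫ w in Ioi (0:ℝ), |Real.log w| / (w+y)^2 := by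
    have := integral_comp_mul_left_Ioi (fun w => |Real.log w| / (w+y)^2) 0 hy
    simpa [mul_zero, smul_eq_mul] using this
  have hAle : ∫ x in Ioi (0:ℝ), |Real.log (y*x)| / (y*x+y)^2
      ≤ ∫ x in Ioi (0:ℝ), (|Real.log y| + |Real.log x|) / (y^2*(x+1)^2) := by
    apply setIntegral_mono_on
    · exact (integrableOn_Ioi_comp_mul_left_iff
        (fun w => |Real.log w| / (w+y)^2) 0 hy).mpr (by simpa [mul_zero] using intlog hy)
    · have hint : IntegrableOn (fun x : ℝ =>
          (|Real.log y| / y^2) * ((x+1)^2)⁻¹ + (y^2)⁻¹ * (|Real.log x| / (x+1)^2)) (Ioi 0) :=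
        ((sq_int one_pos).const_mul _).add ((intlog one_pos).const_mul _)
      refine hint.congr_fun (fun x hx => ?_) measurableSet_Ioi
      have hx0 : (0:ℝ) < x := hx
      have hx1 : (x+1:ℝ) ≠ 0 := by positivity
      field_simp
    · exact measurableSet_Ioi
    · intro x hx
      have hx0 : (0:ℝ) < x := hx
      have hxy : y*x+y = y*(x+1) := by ring
      rw [hxy, Real.log_mul hy.ne' hx0.ne', mul_pow]
      exact div_le_div₀ (by positivity) (abs_add_le _ _) (by positivity) le_rfl
  have hval : ∫ x in Ioi (0:ℝ), (|Real.log y| + |Real.log x|) / (y^2*(x+1)^2)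
      = (y^2)⁻¹ * (|Real.log y| + Cc) := by
    have e : EqOn (fun x : ℝ => (|Real.log y| + |Real.log x|) / (y^2*(x+1)^2))
        (fun x : ℝ => (y^2)⁻¹ * (|Real.log y| * ((x+1)^2)⁻¹ + |Real.log x| / (x+1)^2)) (Ioi 0) :=
      fun x hx => by
        have hx0 : (0:ℝ) < x := hx
        have hx1 : (x+1:ℝ) ≠ 0 := by positivity
        simp only
        field_simp
        try ring
    rw [setIntegral_congr_fun measurableSet_Ioi e, integral_const_mul,
      integral_add ((sq_int one_pos).const_mul _) (intlog one_pos), integral_const_mul,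
      sq_val one_pos]
    simp [Cc]
  have h2 : ∫ w in Ioi (0:ℝ), |Real.log w| / (w+y)^2
      = y * ∫ x in Ioi (0:ℝ), |Real.log (y*x)| / (y*x+y)^2 := by
    rw [h1, ← mul_assoc, mul_inv_cancel₀ hy.ne', one_mul]
  rw [h2]
  calc y * ∫ x in Ioi (0:ℝ), |Real.log (y*x)| / (y*x+y)^2
      ≤ y * ((y^2)⁻¹ * (|Real.log y| + Cc)) :=
        mul_le_mul_of_nonneg_left (hAle.trans_eq hval) hy.le
    _ = (|Real.log y| + Cc) / y := by field_simp


lemma contB : ContinuousOn (fun y : ℝ => Real.sqrt y / (y+1) * ((|Real.log y| + Cc) / y)) (Ioi 0) := by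
  apply ContinuousOn.mul
  · apply ContinuousOn.div
    · exact Real.continuous_sqrt.continuousOn
    · fun_prop
    · intro y hy; have : (0:ℝ) < y := hy; positivity
  · apply ContinuousOn.div
    · exact ((Real.continuousOn_log.mono
        (fun x hx => by simp [ne_of_gt (mem_Ioi.mp hx)])).abs.add continuousOn_const)
    · fun_prop
    · exact fun y hy => (mem_Ioi.mp hy).ne'

lemma rpow_facts {y : ℝ} (hy : 0 < y) :
    Real.sqrt y = (y ^ ((4:ℝ)⁻¹))^2 ∧ y = (y ^ ((4:ℝ)⁻¹))^4 ∧
    y ^ (-(3:ℝ)/4) = ((y ^ ((4:ℝ)⁻¹))^3)⁻¹ ∧ y ^ (-(5:ℝ)/4) = ((y ^ ((4:ℝ)⁻¹))^5)⁻¹ ∧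
    y ^ (-(4:ℝ)⁻¹) = (y ^ ((4:ℝ)⁻¹))⁻¹ := by
  refine ⟨?_, ?_, ?_, ?_, ?_⟩
  · rw [Real.sqrt_eq_rpow, ← Real.rpow_natCast (y ^ _) 2, ← Real.rpow_mul hy.le]; norm_num
  · rw [← Real.rpow_natCast (y ^ _) 4, ← Real.rpow_mul hy.le]; norm_num
  · rw [← Real.rpow_natCast (y ^ _) 3, ← Real.rpow_mul hy.le, ← Real.rpow_neg hy.le]; norm_num
  · rw [← Real.rpow_natCast (y ^ _) 5, ← Real.rpow_mul hy.le, ← Real.rpow_neg hy.le]; norm_num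
  · rw [← Real.rpow_neg hy.le]

lemma B_int : IntegrableOn
    (fun y : ℝ => Real.sqrt y / (y+1) * ((|Real.log y| + Cc) / y)) (Ioi 0) := by
  rw [← Ioc_union_Ioi_eq_Ioi (zero_le_one (α := ℝ))]
  apply IntegrableOn.union
  · apply Integrable.mono' (g := fun y : ℝ => (4+Cc) * y ^ (-(3:ℝ)/4))
    · refine Integrable.const_mul ?_ _
      show IntegrableOn _ _ _
      rw [← intervalIntegrable_iff_integrableOn_Ioc_of_le zero_le_one]
      apply intervalIntegral.intervalIntegrable_rpow'; norm_num
    · exact (contB.mono Ioc_subset_Ioi_self).aestronglyMeasurable measurableSet_Ioc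
    · filter_upwards [ae_restrict_mem measurableSet_Ioc] with y hy
      obtain ⟨hy0, hy1⟩ := hy
      obtain ⟨e1, e2, e3, _, e5⟩ := rpow_facts hy0
      have ha : 0 < y ^ ((4:ℝ)⁻¹) := Real.rpow_pos_of_pos hy0 _
      have ha1 : y ^ ((4:ℝ)⁻¹) ≤ 1 := Real.rpow_le_one hy0.le hy1 (by norm_num)
      have hL := abs_log_le_of_le_one hy0 hy1
      rw [e5] at hL
      set a := y ^ ((4:ℝ)⁻¹)
      set L := |Real.log y| with hLdef
      have hL0 : 0 ≤ L := abs_nonneg _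
      have hLa : L * a ≤ 4 := by
        have := mul_le_mul_of_nonneg_right hL ha.le
        rwa [mul_assoc, inv_mul_cancel₀ ha.ne', mul_one] at this
      have hC := Cc_nonneg
      have hnn : 0 ≤ Real.sqrt y / (y+1) * ((L + Cc) / y) :=
        mul_nonneg (div_nonneg (Real.sqrt_nonneg y) (by linarith))
          (div_nonneg (by linarith) hy0.le)
      rw [Real.norm_eq_abs, abs_of_nonneg hnn]
      rw [show Real.sqrt y = a^2 from e1, show y + 1 = a^4 + 1 by rw [← e2],
        show (L + Cc) / y = (L + Cc) / a^4 by rw [← e2], e3,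
        ← div_eq_mul_inv, div_mul_div_comm, div_le_div_iff₀ (by positivity) (by positivity)]
      nlinarith [mul_le_mul_of_nonneg_left hLa (pow_nonneg ha.le 4),
        mul_le_mul_of_nonneg_left ha1 (mul_nonneg hC (pow_nonneg ha.le 4)),
        mul_nonneg (by linarith : (0:ℝ) ≤ 4 + Cc) (pow_nonneg ha.le 8)]
  · apply Integrable.mono' (g := fun y : ℝ => (4+Cc) * y ^ (-(5:ℝ)/4))
    · exact (integrableOn_Ioi_rpow_of_lt (by norm_num) one_pos).const_mul _
    · exact (contB.mono (fun x (hx : x ∈ Ioi 1) => lt_trans one_pos hx)).aestronglyMeasurable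
        measurableSet_Ioi
    · filter_upwards [ae_restrict_mem measurableSet_Ioi] with y hy
      have hy1 : (1:ℝ) ≤ y := le_of_lt hy
      have hy0 : (0:ℝ) < y := lt_of_lt_of_le one_pos hy1
      obtain ⟨e1, e2, _, e4, _⟩ := rpow_facts hy0
      have ha : 0 < y ^ ((4:ℝ)⁻¹) := Real.rpow_pos_of_pos hy0 _
      have ha1 : 1 ≤ y ^ ((4:ℝ)⁻¹) := Real.one_le_rpow hy1 (by norm_num)
      have hL := abs_log_le_of_one_le hy1
      set a := y ^ ((4:ℝ)⁻¹)
      set L := |Real.log y| with hLdef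
      have hL0 : 0 ≤ L := abs_nonneg _
      have hC := Cc_nonneg
      have hnn : 0 ≤ Real.sqrt y / (y+1) * ((L + Cc) / y) :=
        mul_nonneg (div_nonneg (Real.sqrt_nonneg y) (by linarith))
          (div_nonneg (by linarith) hy0.le)
      rw [Real.norm_eq_abs, abs_of_nonneg hnn]
      rw [show Real.sqrt y = a^2 from e1, show y + 1 = a^4 + 1 by rw [← e2],
        show (L + Cc) / y = (L + Cc) / a^4 by rw [← e2], e4,
        ← div_eq_mul_inv, div_mul_div_comm, div_le_div_iff₀ (by positivity) (by positivity)]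
      nlinarith [mul_le_mul_of_nonneg_left hL (pow_nonneg ha.le 7),
        mul_le_mul_of_nonneg_left ha1 (mul_nonneg (pow_nonneg ha.le 7) hC),
        mul_nonneg (by linarith : (0:ℝ) ≤ 4 + Cc) (pow_nonneg ha.le 4)]

theorem stmt_6 :
    MeasureTheory.IntegrableOn
      (fun p : ℝ × ℝ => Real.sqrt p.1 * |Real.log p.2| / ((p.1 + 1) * (p.2 + p.1) ^ 2))
      (Set.Ioi 0 ×ˢ Set.Ioi 0) ∧
    ∫ y in Set.Ioi (0 : ℝ), ∫ w in Set.Ioi (0 : ℝ),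
        Real.sqrt y * Real.log w / ((y + 1) * (w + y) ^ 2) = 0 := by
  constructor
  · -- integrability
    set F : ℝ × ℝ → ℝ :=
      fun p => Real.sqrt p.1 * |Real.log p.2| / ((p.1 + 1) * (p.2 + p.1) ^ 2) with hF
    have hms : MeasurableSet (Ioi (0:ℝ) ×ˢ Ioi (0:ℝ)) :=
      measurableSet_Ioi.prod measurableSet_Ioi
    have contF : ContinuousOn F (Ioi 0 ×ˢ Ioi 0) := by
      apply ContinuousOn.div
      · apply ContinuousOn.mul
        · exact (Real.continuous_sqrt.comp continuous_fst).continuousOn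
        · refine ContinuousOn.abs (Real.continuousOn_log.comp continuous_snd.continuousOn ?_)
          intro p hp
          exact (ne_of_gt (hp.2 : (0:ℝ) < p.2))
      · fun_prop
      · intro p hp
        have h1 : (0:ℝ) < p.1 := hp.1
        have h2 : (0:ℝ) < p.2 := hp.2
        positivity
    have aesm : AEStronglyMeasurable F
        ((volume.restrict (Ioi 0)).prod (volume.restrict (Ioi 0))) := by
      rw [Measure.prod_restrict, ← Measure.volume_eq_prod]
      exact contF.aestronglyMeasurable hms
    rw [IntegrableOn, Measure.volume_eq_prod, ← Measure.prod_restrict,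
      integrable_prod_iff aesm]
    constructor
    · filter_upwards [ae_restrict_mem measurableSet_Ioi] with y hy
      have hy0 : (0:ℝ) < y := hy
      refine ((intlog hy0).const_mul (Real.sqrt y / (y+1))).congr (ae_of_all _ fun w => ?_)
      simp only [hF]
      rw [div_mul_div_comm]
    · apply Integrable.mono' B_int (aesm.norm.integral_prod_right')
      filter_upwards [ae_restrict_mem measurableSet_Ioi] with y hy
      have hy0 : (0:ℝ) < y := hy
      have h0 : ∫ w in Ioi (0:ℝ), ‖F (y, w)‖
          = (Real.sqrt y / (y+1)) * ∫ w in Ioi (0:ℝ), |Real.log w| / (w+y)^2 := by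
        rw [← integral_const_mul]
        refine setIntegral_congr_fun measurableSet_Ioi (fun w hw => ?_)
        have hw0 : (0:ℝ) < w := hw
        have hnn : 0 ≤ F (y, w) := by
          apply div_nonneg (mul_nonneg (Real.sqrt_nonneg _) (abs_nonneg _))
          have : (0:ℝ) ≤ (w + y)^2 := sq_nonneg _
          nlinarith
        rw [Real.norm_eq_abs, abs_of_nonneg hnn]
        simp only [hF]
        rw [div_mul_div_comm]
      rw [Real.norm_eq_abs, abs_of_nonneg (integral_nonneg fun w => norm_nonneg _), h0]
      exact mul_le_mul_of_nonneg_left (inner_bound hy0)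
        (div_nonneg (Real.sqrt_nonneg _) (by linarith))
  · -- value
    have inner_eq : EqOn
        (fun y : ℝ => ∫ w in Ioi (0:ℝ), Real.sqrt y * Real.log w / ((y+1)*(w+y)^2))
        (fun y : ℝ => Real.sqrt y * Real.log y / ((y+1)*y)) (Ioi 0) := by
      intro y hy
      have hy0 : (0:ℝ) < y := hy
      have e : EqOn (fun w : ℝ => Real.sqrt y * Real.log w / ((y+1)*(w+y)^2))
          (fun w : ℝ => (Real.sqrt y / (y+1)) * (Real.log w / (w+y)^2)) (Ioi 0) :=
        fun w hw => by simp only; rw [div_mul_div_comm]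
      simp only
      rw [setIntegral_congr_fun measurableSet_Ioi e, integral_const_mul, inner_val hy0,
        div_mul_div_comm]
    rw [setIntegral_congr_fun measurableSet_Ioi inner_eq]
    exact outer_zero
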